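/- C(M) = lfp(F(M)): for every rooted pushdown system M, the compaction of M equals the least fixed point of the monotone iteration function F(M), started from the empty state and edge sets with root q₀. -/
import Mathlib


/-! ### Pushdown systems: stack actions, configurations, transitions -/

/-- Stack actions `Γ±`: push a character, pop a character, or leave the stack unchanged. -/
inductive StackAct (Γ : Type*) where
  | push : Γ → StackAct Γ
  | pop  : Γ → StackAct Γ
  | eps  : StackAct Γ

/-- A rooted pushdown system `(Q, Γ, δ, q₀)`; `Q` and `Γ` are the (type-level) state
and stack spaces, `δ` the transition relation and `q₀` the initial control state. -/
structure RPDS (Q Γ : Type*) where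
  δ : Q → StackAct Γ → Q → Prop
  q₀ : Q

/-- Configurations `Q × Γ*` of a pushdown system (head of the list = top of the stack). -/
abbrev Cfg (Q Γ : Type*) := Q × List Γ

variable {Q Γ : Type*}

/-- The labeled transition relation between configurations. -/
inductive LStep (M : RPDS Q Γ) : Cfg Q Γ → StackAct Γ → Cfg Q Γ → Prop
  | eps {q q' : Q} {κ : List Γ} :
      M.δ q .eps q' → LStep M (q, κ) .eps (q', κ)
  | pop {q q' : Q} {γ : Γ} {κ : List Γ} :
      M.δ q (.pop γ) q' → LStep M (q, γ :: κ) (.pop γ) (q', κ)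
  | push {q q' : Q} {γ : Γ} {κ : List Γ} :
      M.δ q (.push γ) q' → LStep M (q, κ) (.push γ) (q', γ :: κ)

/-- The unlabeled transition relation: some stack action enables the transition. -/
def PStep (M : RPDS Q Γ) (c c' : Cfg Q Γ) : Prop := ∃ g, LStep M c g c'

/-- Multi-step transition `⟼*`. -/
def Reaches (M : RPDS Q Γ) : Cfg Q Γ → Cfg Q Γ → Prop :=
  Relation.ReflTransGen (PStep M)

/-- Root-reachable labeled transition between configurations:
`c ⟾^g c'` iff `(q₀, ⟨⟩) ⟼* c` and `c ⟼^g c'`. -/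
def RootStep (M : RPDS Q Γ) (c : Cfg Q Γ) (g : StackAct Γ) (c' : Cfg Q Γ) : Prop :=
  Reaches M (M.q₀, []) c ∧ LStep M c g c'

/-- Root-reachable labeled transition on control states. -/
def RootTransL (M : RPDS Q Γ) (q : Q) (g : StackAct Γ) (q' : Q) : Prop :=
  ∃ κ κ', RootStep M (q, κ) g (q', κ')

/-- Root-reachable transition on control states (some action). -/
def RootTrans (M : RPDS Q Γ) (q q' : Q) : Prop := ∃ g, RootTransL M q g q'

/-- The least fixed point of a function on a complete lattice
(the Knaster–Tarski formula). -/
def lfpOf {α : Type*} [CompleteLattice α] (f : α → α) : α := sInf {x | f x ≤ x}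

/-- A "graph": a set of control states together with a set of labeled edges. -/
abbrev PGraph (Q Γ : Type*) := Set Q × Set (Q × StackAct Γ × Q)

/-- The compaction `C(M)` of a rooted pushdown system: its states are the
root-reachable control states and its edges the root-reachable transitions. -/
def Compaction (M : RPDS Q Γ) : PGraph Q Γ :=
  ({q | ∃ κ, Reaches M (M.q₀, []) (q, κ)},
   {e | RootTransL M e.1 e.2.1 e.2.2})

/-- The iteration function `F(M)`: accrete the root-reachable successors of the
current states, the root, and the root-reachable edges out of current states. -/
def Fiter (M : RPDS Q Γ) (X : PGraph Q Γ) : PGraph Q Γ :=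
  (X.1 ∪ {s' | ∃ s ∈ X.1, RootTrans M s s'} ∪ {M.q₀},
   X.2 ∪ {e | e.1 ∈ X.1 ∧ RootTransL M e.1 e.2.1 e.2.2})

/-- `C(M) = lfp(F(M))`: for every rooted pushdown system `M`,
the iteration function `F(M)` is monotone, and the compaction of `M` equals the
least fixed point of `F(M)` (i.e. the limit of iterating from the empty state
and edge sets with root `q₀`). -/
theorem compaction_eq_lfp (M : RPDS Q Γ) :
    Monotone (Fiter M) ∧ Compaction M = lfpOf (Fiter M) := by
  have mono : Monotone (Fiter M) := by
    intro X Y h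
    refine ⟨?_, ?_⟩
    · intro s hs
      rcases hs with (hs | ⟨t, ht, htr⟩) | hs
      · exact Or.inl (Or.inl (h.1 hs))
      · exact Or.inl (Or.inr ⟨t, h.1 ht, htr⟩)
      · exact Or.inr hs
    · intro e he
      rcases he with he | ⟨h1, h2⟩
      · exact Or.inl (h.2 he)
      · exact Or.inr ⟨h.1 h1, h2⟩
  refine ⟨mono, ?_⟩
  have hstate : ∀ X : PGraph Q Γ, Fiter M X ≤ X →
      ∀ c : Cfg Q Γ, Reaches M (M.q₀, []) c → c.1 ∈ X.1 := by
    intro X hX c hc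
    induction hc with
    | refl => exact hX.1 (Or.inr rfl)
    | tail hab hbc ih =>
      rename_i b c'
      rcases hbc with ⟨g, hg⟩
      exact hX.1 (Or.inl (Or.inr ⟨b.1, ih, g, b.2, c'.2, hab, hg⟩))
  apply le_antisymm
  · apply le_sInf
    intro X hX
    refine ⟨?_, ?_⟩
    · rintro q ⟨κ, hκ⟩
      exact hstate X hX (q, κ) hκ
    · rintro ⟨q, g, q'⟩ ⟨κ, κ', hr, hl⟩
      exact hX.2 (Or.inr ⟨hstate X hX (q, κ) hr, κ, κ', hr, hl⟩)
  · apply sInf_le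
    refine ⟨?_, ?_⟩
    · intro s hs
      rcases hs with (⟨κ, hκ⟩ | ⟨t, ⟨κ, hκ⟩, g, κ1, κ2, hr, hl⟩) | hs
      · exact ⟨κ, hκ⟩
      · exact ⟨κ2, hr.tail ⟨g, hl⟩⟩
      · cases hs; exact ⟨[], Relation.ReflTransGen.refl⟩
    · intro e he
      rcases he with he | ⟨_, h2⟩
      · exact he
      · exact h2
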